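/- arXiv:0704.1282 — 11 statements merged into one kernel-verified Lean document; each statement's English description precedes it below -/
import Mathlib

section
/- For every integer m and every integer n ≥ 2, |e - m/n!| > 1/(n+1)!. -/
open Finset

theorem e_dist_factorial (m : ℤ) (n : ℕ) (hn : 2 ≤ n) :
    |Real.exp 1 - (m : ℝ) / (n.factorial : ℝ)| > 1 / ((n + 1).factorial : ℝ) := by
  have hnf : (0:ℝ) < (n.factorial : ℝ) := by exact_mod_cast n.factorial_pos
  have hnf1 : (0:ℝ) < ((n+1).factorial : ℝ) := by exact_mod_cast (n+1).factorial_pos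
  have hn1 : (0:ℝ) < (n:ℝ)+1 := by positivity
  set S : ℝ := ∑ i ∈ range (n+1), (1:ℝ)^i / (i.factorial : ℝ) with hS
  -- n! * S is an integer A
  obtain ⟨A, hA⟩ : ∃ A : ℤ, (A : ℝ) = (n.factorial : ℝ) * S := by
    refine ⟨((∑ i ∈ range (n+1), (n.factorial / i.factorial : ℕ) : ℕ) : ℤ), ?_⟩
    rw [Int.cast_natCast, Nat.cast_sum, hS, Finset.mul_sum]
    refine Finset.sum_congr rfl fun i hi => ?_
    have hdvd : i.factorial ∣ n.factorial :=
      Nat.factorial_dvd_factorial (Nat.lt_succ_iff.mp (mem_range.mp hi))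
    have hif : ((i.factorial : ℝ)) ≠ 0 := by
      exact_mod_cast (Nat.factorial_pos i).ne'
    rw [Nat.cast_div hdvd hif, one_pow]
    ring
  -- lower bound on the tail
  have hlow : S + 1 / ((n+1).factorial : ℝ) < Real.exp 1 := by
    have h1 : ∑ i ∈ range (n+3), (1:ℝ)^i / (i.factorial : ℝ) ≤ Real.exp 1 :=
      Real.sum_le_exp_of_nonneg zero_le_one _
    have h2 : ∑ i ∈ range (n+3), (1:ℝ)^i / (i.factorial : ℝ)
        = S + 1/((n+1).factorial:ℝ) + 1/((n+2).factorial:ℝ) := by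
      rw [hS]
      show ∑ i ∈ range (n+1+1+1), (1:ℝ)^i / (i.factorial : ℝ) = _
      rw [Finset.sum_range_succ, Finset.sum_range_succ]
      norm_num
    have h3 : (0:ℝ) < 1/((n+2).factorial:ℝ) := by
      have : (0:ℝ) < ((n+2).factorial : ℝ) := by exact_mod_cast (n+2).factorial_pos
      positivity
    linarith
  -- upper bound on the tail
  have hup : Real.exp 1 - S ≤ ((n:ℝ)+2) / (((n+1).factorial : ℝ) * ((n:ℝ)+1)) := by
    have h := (abs_sub_le_iff.1 (Real.exp_bound (x := 1) (by norm_num)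
      (n := n+1) (by omega))).1
    rw [abs_one, one_pow, one_mul, ← hS] at h
    have hc1 : (((n+1).succ : ℕ) : ℝ) = (n:ℝ)+2 := by push_cast; ring
    have hc2 : (((n+1) : ℕ) : ℝ) = (n:ℝ)+1 := by push_cast; ring
    rw [hc1, hc2] at h
    exact h
  have hfac : ((n+1).factorial : ℝ) = ((n:ℝ)+1) * (n.factorial : ℝ) := by
    rw [Nat.factorial_succ]; push_cast; ring
  have hr_low : (n.factorial : ℝ) * Real.exp 1 - A > 1/((n:ℝ)+1) := by
    rw [hA]
    have : (n.factorial : ℝ) * (1 / ((n+1).factorial : ℝ)) = 1/((n:ℝ)+1) := by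
      rw [hfac]; field_simp
    nlinarith [hlow, hnf]
  have hr_up : (n.factorial : ℝ) * Real.exp 1 - A < (n:ℝ)/((n:ℝ)+1) := by
    rw [hA]
    have h1 : (n.factorial : ℝ) * (Real.exp 1 - S)
        ≤ (n.factorial : ℝ) * (((n:ℝ)+2) / (((n+1).factorial : ℝ) * ((n:ℝ)+1))) :=
      mul_le_mul_of_nonneg_left hup hnf.le
    have h2 : (n.factorial : ℝ) * (((n:ℝ)+2) / (((n+1).factorial : ℝ) * ((n:ℝ)+1)))
        = ((n:ℝ)+2) / (((n:ℝ)+1) * ((n:ℝ)+1)) := by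
      rw [hfac]; field_simp
    have h3 : ((n:ℝ)+2) / (((n:ℝ)+1) * ((n:ℝ)+1)) < (n:ℝ)/((n:ℝ)+1) := by
      rw [div_lt_div_iff₀ (by positivity) hn1]
      have hn2 : (2:ℝ) ≤ (n:ℝ) := by exact_mod_cast hn
      nlinarith
    nlinarith
  have hpos : (0:ℝ) < 1/((n:ℝ)+1) := by positivity
  have hsum : (n:ℝ)/((n:ℝ)+1) + 1/((n:ℝ)+1) = 1 := by field_simp
  have key : |(n.factorial : ℝ) * Real.exp 1 - (m:ℝ)| > 1/((n:ℝ)+1) := by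
    rcases le_or_gt m A with hm | hm
    · have : (m:ℝ) ≤ (A:ℝ) := by exact_mod_cast hm
      rw [abs_of_pos (by linarith)]
      linarith
    · have : (A:ℝ) + 1 ≤ (m:ℝ) := by exact_mod_cast hm
      rw [abs_of_neg (by linarith)]
      linarith
  have heq : Real.exp 1 - (m:ℝ)/(n.factorial:ℝ)
      = ((n.factorial : ℝ) * Real.exp 1 - (m:ℝ)) / (n.factorial : ℝ) := by
    field_simp
  rw [heq, abs_div, abs_of_pos hnf, gt_iff_lt, div_lt_div_iff₀ hnf1 hnf, hfac]
  rw [gt_iff_lt, div_lt_iff₀ hn1] at key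
  nlinarith [hnf, key]
end

section
/- For all integers p and q with q > 1, |e - p/q| > 1/(S(q)+1)!, where S(q) is the smallest positive integer k such that q divides k!. -/
/-- The Smarandache function: the least positive `k` with `q ∣ k!`. -/
noncomputable def S (q : ℕ) : ℕ := sInf {k : ℕ | 0 < k ∧ q ∣ k.factorial}

theorem e_irrationality_measure (p : ℤ) (q : ℕ) (hq : 1 < q) :
    |Real.exp 1 - (p : ℝ) / (q : ℝ)| > 1 / ((S q + 1).factorial : ℝ) := by
  set n := S q with hn
  -- S q is a member of the defining set
  have hmem : 0 < n ∧ q ∣ n.factorial := by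
    have : n ∈ {k : ℕ | 0 < k ∧ q ∣ k.factorial} := by
      apply Nat.sInf_mem
      exact ⟨q, by omega, Nat.dvd_factorial (by omega) le_rfl⟩
    exact this
  obtain ⟨hnpos, hdvd⟩ := hmem
  have hn2 : 2 ≤ n := by
    by_contra h
    have h1 : n = 1 := by omega
    rw [h1] at hdvd
    simp [Nat.factorial] at hdvd
    omega
  -- sum E = ∑_{i ≤ n} 1/i!
  set E : ℝ := ∑ i ∈ Finset.range (n + 1), (1 : ℝ) ^ i / i.factorial with hE
  have hfacpos : (0 : ℝ) < n.factorial := by positivity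
  have hn1pos : (0 : ℝ) < (n : ℝ) + 1 := by positivity
  -- lower bound: exp 1 > E + 1/(n+1)!
  have hlb : E + 1 / ((n + 1).factorial : ℝ) < Real.exp 1 := by
    have h := Real.sum_le_exp_of_nonneg (by norm_num : (0:ℝ) ≤ 1) (n + 3)
    have hsplit : ∑ i ∈ Finset.range (n + 3), (1 : ℝ) ^ i / i.factorial
        = E + 1 / ((n+1).factorial : ℝ) + 1 / ((n+2).factorial : ℝ) := by
      rw [Finset.sum_range_succ, Finset.sum_range_succ]
      simp [hE]
    rw [hsplit] at h
    have hpos : (0:ℝ) < 1 / ((n+2).factorial : ℝ) := by positivity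
    linarith
  -- upper bound from exp_bound
  have hub : Real.exp 1 - E ≤ ((n : ℝ) + 2) / (((n+1).factorial : ℝ) * ((n:ℝ) + 1)) := by
    have h := Real.exp_bound (x := 1) (by norm_num) (n := n + 1) (by omega)
    have h' := (abs_le.mp h).2
    have : ∑ m ∈ Finset.range (n + 1), (1:ℝ) ^ m / m.factorial = E := rfl
    rw [this] at h'
    simp only [abs_one, one_pow, one_mul, Nat.succ_eq_add_one] at h'
    push_cast at h' ⊢
    have he : ((n:ℝ) + 1 + 1) = (n:ℝ) + 2 := by ring
    rw [he] at h'
    exact h'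
  -- integers A and B
  set A : ℕ := ∑ i ∈ Finset.range (n + 1), n.factorial / i.factorial with hA
  have hAcast : (A : ℝ) = (n.factorial : ℝ) * E := by
    rw [hA, hE, Nat.cast_sum, Finset.mul_sum]
    apply Finset.sum_congr rfl
    intro i hi
    have hi' : i ≤ n := by simpa using Nat.lt_succ_iff.mp (Finset.mem_range.mp hi)
    rw [Nat.cast_div (Nat.factorial_dvd_factorial hi')
      (by positivity)]
    field_simp
    simp
  set B : ℤ := ((n.factorial / q : ℕ) : ℤ) * p with hB
  have hBcast : (B : ℝ) = (n.factorial : ℝ) * ((p : ℝ) / (q : ℝ)) := by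
    rw [hB]
    rw [Int.cast_mul, Int.cast_natCast, Nat.cast_div hdvd (by positivity : ((q:ℝ)) ≠ 0)]
    push_cast [Nat.cast_div hdvd (by positivity : ((q:ℝ)) ≠ 0)]
    field_simp
  -- r = n! (e - E)
  set r : ℝ := (n.factorial : ℝ) * (Real.exp 1 - E) with hr
  have hrlb : 1 / ((n : ℝ) + 1) < r := by
    have : ((n+1).factorial : ℝ) = (n.factorial : ℝ) * ((n:ℝ) + 1) := by
      rw [Nat.factorial_succ]; push_cast; ring
    rw [hr]
    rw [this] at hlb
    have h2 : 1 / ((n.factorial : ℝ) * ((n:ℝ)+1)) < Real.exp 1 - E := by linarith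
    calc 1 / ((n : ℝ) + 1) = (n.factorial : ℝ) * (1 / ((n.factorial : ℝ) * ((n:ℝ)+1))) := by
          field_simp
      _ < (n.factorial : ℝ) * (Real.exp 1 - E) := by
          exact mul_lt_mul_of_pos_left h2 hfacpos
  have hrub : r < ((n : ℝ)) / ((n : ℝ) + 1) := by
    have hfs : ((n+1).factorial : ℝ) = (n.factorial : ℝ) * ((n:ℝ) + 1) := by
      rw [Nat.factorial_succ]; push_cast; ring
    rw [hfs] at hub
    have h2 : r ≤ ((n:ℝ) + 2) / (((n:ℝ)+1) * ((n:ℝ)+1)) := by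
      rw [hr]
      calc (n.factorial : ℝ) * (Real.exp 1 - E)
          ≤ (n.factorial : ℝ) * (((n:ℝ)+2) / ((n.factorial : ℝ) * ((n:ℝ)+1) * ((n:ℝ)+1))) :=
            mul_le_mul_of_nonneg_left hub hfacpos.le
        _ = ((n:ℝ) + 2) / (((n:ℝ)+1) * ((n:ℝ)+1)) := by field_simp
    have h3 : ((n:ℝ) + 2) / (((n:ℝ)+1) * ((n:ℝ)+1)) < (n:ℝ) / ((n:ℝ)+1) := by
      rw [div_lt_div_iff₀ (by positivity) hn1pos]
      have : (2:ℝ) ≤ (n:ℝ) := by exact_mod_cast hn2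
      nlinarith
    linarith
  -- key identity
  have hkey : (n.factorial : ℝ) * (Real.exp 1 - (p : ℝ) / (q : ℝ)) = r + ((A : ℤ) - B : ℤ) := by
    push_cast
    rw [hAcast, hBcast, hr]
    ring
  -- |r + m| > 1/(n+1)
  set m : ℤ := (A : ℤ) - B with hm
  have habs : 1 / ((n : ℝ) + 1) < |r + (m : ℝ)| := by
    rcases le_or_gt 0 m with hm0 | hm0
    · have : (0:ℝ) ≤ (m : ℝ) := by exact_mod_cast hm0
      have hpos : (0:ℝ) < r + (m:ℝ) := by
        have h1 : (0:ℝ) < 1 / ((n:ℝ)+1) := by positivity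
        linarith
      rw [abs_of_pos hpos]
      linarith
    · have hm1 : (m : ℝ) ≤ -1 := by
        have h1 : m + 1 ≤ 0 := by omega
        have h2 : (m : ℝ) + 1 ≤ 0 := by exact_mod_cast h1
        linarith
      have hneg : r + (m : ℝ) < 0 := by
        have : r < 1 := lt_trans hrub (by rw [div_lt_one hn1pos]; linarith)
        linarith
      rw [abs_of_neg hneg]
      have : (n:ℝ)/((n:ℝ)+1) = 1 - 1/((n:ℝ)+1) := by field_simp; ring
      linarith [hrub.trans_le (le_of_eq this)]
  -- finish
  have hfs : ((n+1).factorial : ℝ) = (n.factorial : ℝ) * ((n:ℝ) + 1) := by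
    rw [Nat.factorial_succ]; push_cast; ring
  rw [gt_iff_lt, hfs]
  have habs2 : |Real.exp 1 - (p : ℝ) / (q : ℝ)| = |r + (m : ℝ)| / (n.factorial : ℝ) := by
    rw [← hkey, abs_mul, abs_of_pos hfacpos]
    field_simp
  rw [habs2]
  rw [div_lt_div_iff₀ (by positivity) hfacpos]
  rw [div_lt_iff₀ hn1pos] at habs
  nlinarith [habs, hfacpos]
end

section
/- For all integers p and q with q > 1, |e - p/q| > 1/(q+1)!. -/
open Finset

theorem e_weak_measure (p : ℤ) (q : ℕ) (hq : 1 < q) :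
    |Real.exp 1 - (p : ℝ) / (q : ℝ)| > 1 / ((q + 1).factorial : ℝ) := by
  have hq0 : (0:ℝ) < q := by positivity
  have hN0 : (0:ℝ) < (q.factorial : ℝ) := by positivity
  set S : ℝ := ∑ m ∈ range (q + 1), (1:ℝ) ^ m / m.factorial with hS
  set t : ℝ := Real.exp 1 - S with ht
  -- lower bound on the tail
  have h1 : 1 / ((q + 1).factorial : ℝ) < t := by
    have hle : ∑ m ∈ range (q + 3), (1:ℝ) ^ m / m.factorial ≤ Real.exp 1 :=
      Real.sum_le_exp_of_nonneg zero_le_one _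
    rw [show q + 3 = (q + 1) + 1 + 1 by ring, Finset.sum_range_succ, Finset.sum_range_succ,
      ← hS] at hle
    simp only [one_pow] at hle
    have hpos : (0:ℝ) < 1 / ((q + 1 + 1).factorial : ℝ) := by positivity
    rw [ht]
    rw [one_div] at hpos ⊢
    rw [div_eq_mul_inv, one_mul, div_eq_mul_inv, one_mul] at hle
    linarith
  -- upper bound on the tail
  have h2 : t < 1 / ((q:ℝ) * q.factorial) := by
    have hb := Real.exp_bound (x := 1) (by norm_num) (n := q + 1) (by omega)
    rw [← hS] at hb
    simp only [abs_one, one_pow, one_mul] at hb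
    have hb' : t ≤ ((q + 2 : ℝ)) / (((q+1).factorial : ℝ) * (q + 1)) := by
      rw [ht]
      refine le_trans (abs_le.mp hb).2 (le_of_eq ?_)
      push_cast [Nat.succ_eq_add_one]
      ring
    have hkey : ((q + 2 : ℝ)) / (((q+1).factorial : ℝ) * (q + 1)) < 1 / ((q:ℝ) * q.factorial) := by
      rw [div_lt_div_iff₀ (by positivity) (by positivity)]
      have hfac : ((q+1).factorial : ℝ) = (q+1) * q.factorial := by
        rw [Nat.factorial_succ]; push_cast; ring
      rw [hfac]
      have : (q:ℝ) * (q + 2) < (q + 1) * (q + 1) := by nlinarith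
      nlinarith
    linarith
  -- integer K = q! * S
  set K : ℕ := ∑ m ∈ range (q + 1), q.factorial / m.factorial with hK
  have hKS : (K : ℝ) = (q.factorial : ℝ) * S := by
    rw [hK, hS, Nat.cast_sum, Finset.mul_sum]
    refine Finset.sum_congr rfl fun m hm => ?_
    have hmq : m ≤ q := by simpa [Nat.lt_succ_iff] using Finset.mem_range.mp hm
    have hdvd : m.factorial ∣ q.factorial := Nat.factorial_dvd_factorial hmq
    rw [Nat.cast_div hdvd (by positivity)]
    rw [one_pow]
    ring
  -- c = q!/q
  set c : ℕ := q.factorial / q with hc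
  have hcq : (c : ℝ) * q = (q.factorial : ℝ) := by
    rw [hc, ← Nat.cast_mul, Nat.div_mul_cancel (Nat.dvd_factorial (by omega) le_rfl)]
  -- reduce to |q! e - c p| > 1/(q+1)
  have hmain : |(q.factorial : ℝ) * Real.exp 1 - (c : ℝ) * p| > 1 / ((q:ℝ) + 1) := by
    have hNt : (q.factorial : ℝ) * t > 1 / ((q:ℝ) + 1) := by
      have hfac : ((q+1).factorial : ℝ) = (q+1) * q.factorial := by
        rw [Nat.factorial_succ]; push_cast; ring
      have := (mul_lt_mul_iff_right₀ hN0).mpr h1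
      rw [hfac] at this
      calc 1 / ((q:ℝ) + 1) = (q.factorial : ℝ) * (1 / (((q:ℝ)+1) * q.factorial)) := by
            field_simp
        _ < (q.factorial : ℝ) * t := this
    have hNt2 : (q.factorial : ℝ) * t < 1 / (q:ℝ) := by
      have := (mul_lt_mul_iff_right₀ hN0).mpr h2
      calc (q.factorial : ℝ) * t < (q.factorial : ℝ) * (1 / ((q:ℝ) * q.factorial)) := this
        _ = 1 / (q:ℝ) := by field_simp
    by_cases hcase : (c : ℤ) * p = (K : ℤ)
    · have : (c : ℝ) * p = (K : ℝ) := by exact_mod_cast congrArg (Int.cast : ℤ → ℝ) hcase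
      rw [this, hKS]
      have : (q.factorial : ℝ) * Real.exp 1 - (q.factorial : ℝ) * S = (q.factorial : ℝ) * t := by
        rw [ht]; ring
      rw [this, abs_of_pos (by
        have : (0:ℝ) < 1 / ((q:ℝ) + 1) := by positivity
        linarith)]
      exact hNt
    · have hge1 : (1:ℝ) ≤ |(K : ℝ) - (c : ℝ) * p| := by
        have hne : (K : ℤ) - (c : ℤ) * p ≠ 0 := by omega
        have h1le : (1:ℤ) ≤ |(K : ℤ) - (c : ℤ) * p| := Int.one_le_abs hne
        calc (1:ℝ) = ((1:ℤ):ℝ) := by norm_num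
          _ ≤ ((|(K : ℤ) - (c : ℤ) * p| : ℤ) : ℝ) := by exact_mod_cast h1le
          _ = |(K : ℝ) - (c : ℝ) * p| := by push_cast [Int.cast_abs]; norm_num
      have habs : |(q.factorial : ℝ) * Real.exp 1 - (c : ℝ) * p| ≥
          |(K : ℝ) - (c : ℝ) * p| - |(q.factorial : ℝ) * Real.exp 1 - (K : ℝ)| := by
        have := abs_sub_abs_le_abs_sub ((K : ℝ) - (c : ℝ) * p)
          ((K : ℝ) - (q.factorial : ℝ) * Real.exp 1)
        have h' : (K : ℝ) - (c : ℝ) * p - ((K : ℝ) - (q.factorial : ℝ) * Real.exp 1)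
            = (q.factorial : ℝ) * Real.exp 1 - (c : ℝ) * p := by ring
        rw [h', abs_sub_comm ((K:ℝ)) ((q.factorial : ℝ) * Real.exp 1)] at this
        linarith
      have hEK : |(q.factorial : ℝ) * Real.exp 1 - (K : ℝ)| = (q.factorial : ℝ) * t := by
        rw [hKS, show (q.factorial : ℝ) * Real.exp 1 - (q.factorial : ℝ) * S
          = (q.factorial : ℝ) * t by rw [ht]; ring]
        exact abs_of_pos (by
          have h1' : (0:ℝ) < 1 / ((q:ℝ)+1) := by positivity
          nlinarith [hNt])
      have hq2 : (2:ℝ) ≤ (q:ℝ) := by exact_mod_cast hq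
      have hfrac : 1 / (q:ℝ) ≤ 1/2 := by
        rw [div_le_div_iff₀ hq0 (by norm_num)]; linarith
      have hfrac2 : 1 / ((q:ℝ)+1) ≤ 1/3 := by
        rw [div_le_div_iff₀ (by linarith) (by norm_num)]; linarith
      rw [hEK] at habs
      have hstep : 1 / ((q:ℝ) + 1) < 1 - (q.factorial : ℝ) * t := by linarith
      have hXA : |(q.factorial:ℝ) * Real.exp 1 - (c:ℝ) * p| ≥ 1 - (q.factorial:ℝ) * t := by
        linarith [habs, hge1]
      exact lt_of_lt_of_le hstep hXA
  -- conclude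
  have hedp : |Real.exp 1 - (p : ℝ) / (q : ℝ)| =
      |(q.factorial : ℝ) * Real.exp 1 - (c : ℝ) * p| / (q.factorial : ℝ) := by
    rw [eq_div_iff (ne_of_gt hN0), ← abs_of_pos hN0, ← abs_mul]
    congr 1
    field_simp
    rw [abs_of_pos hN0]
    linear_combination (p : ℝ) * hcq
  rw [hedp, gt_iff_lt, lt_div_iff₀ hN0]
  have hfac : ((q+1).factorial : ℝ) = (q+1) * q.factorial := by
    rw [Nat.factorial_succ]; push_cast; ring
  calc 1 / ((q + 1).factorial : ℝ) * (q.factorial : ℝ) = 1 / ((q:ℝ)+1) := by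
        rw [hfac, one_div, mul_inv, mul_assoc, inv_mul_cancel₀ hN0.ne', mul_one, one_div]
    _ < |(q.factorial : ℝ) * Real.exp 1 - (c : ℝ) * p| := hmain
end

section
/- If n is a prime number and q = n! > 1, then for all integers p, |e - p/q| > 1/(P(q)+1)!, where P(q) is the largest prime factor of q. -/
/-- The largest prime factor of `q`. -/
noncomputable def P (q : ℕ) : ℕ := sSup {p : ℕ | p.Prime ∧ p ∣ q}

lemma P_factorial (n : ℕ) (hn : n.Prime) : P (n.factorial) = n := by
  have hset : {p : ℕ | p.Prime ∧ p ∣ n.factorial} = {p : ℕ | p.Prime ∧ p ≤ n} := by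
    ext p
    simp only [Set.mem_setOf_eq]
    exact and_congr_right fun hp => hp.dvd_factorial
  rw [P, hset]
  have hbdd : BddAbove {p : ℕ | p.Prime ∧ p ≤ n} := ⟨n, fun p hp => hp.2⟩
  exact le_antisymm (csSup_le ⟨n, hn, le_refl n⟩ fun p hp => hp.2)
    (le_csSup hbdd ⟨hn, le_refl n⟩)

theorem e_measure_prime_factorial (n : ℕ) (hn : n.Prime) (q : ℕ) (hq : q = n.factorial)
    (hq1 : 1 < q) (p : ℤ) :
    |Real.exp 1 - (p : ℝ) / (q : ℝ)| > 1 / ((P q + 1).factorial : ℝ) := by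
  have hn2 : 2 ≤ n := hn.two_le
  subst hq
  rw [P_factorial n hn]
  set S : ℝ := ∑ i ∈ Finset.range (n+1), 1 / (i.factorial : ℝ) with hS
  set m : ℤ := ∑ i ∈ Finset.range (n+1), ((n.factorial / i.factorial : ℕ) : ℤ) with hm
  have hF1 : (0:ℝ) < (n.factorial : ℝ) := by exact_mod_cast n.factorial_pos
  have hF2 : (0:ℝ) < ((n+1).factorial : ℝ) := by exact_mod_cast (n+1).factorial_pos
  have hF2eq : ((n+1).factorial : ℝ) = (n+1) * (n.factorial : ℝ) := by
    rw [Nat.factorial_succ]; push_cast; ring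
  have hF3eq : ((n+2).factorial : ℝ) = (n+2) * ((n+1).factorial : ℝ) := by
    rw [show n+2 = (n+1)+1 from rfl, Nat.factorial_succ]; push_cast; ring
  have hmS : (m : ℝ) = (n.factorial : ℝ) * S := by
    rw [hm, hS, Finset.mul_sum, Int.cast_sum]
    apply Finset.sum_congr rfl
    intro i hi
    rw [Finset.mem_range, Nat.lt_succ_iff] at hi
    rw [Int.cast_natCast, Nat.cast_div (Nat.factorial_dvd_factorial hi)
      (Nat.cast_ne_zero.mpr (Nat.factorial_pos i).ne')]
    ring
  -- tail lower bound
  have h_lb : 1 / ((n+1).factorial : ℝ) + 1 / ((n+2).factorial : ℝ) ≤ Real.exp 1 - S := by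
    have h := Real.sum_le_exp_of_nonneg (x := 1) zero_le_one (n+3)
    simp only [one_pow] at h
    rw [show n+3 = (n+2)+1 from rfl, Finset.sum_range_succ,
      show n+2 = (n+1)+1 from rfl, Finset.sum_range_succ] at h
    rw [← hS] at h
    linarith
  -- tail upper bound
  have h_ub : Real.exp 1 - S ≤ ((n:ℝ)+2) / (((n+1).factorial : ℝ) * ((n:ℝ)+1)) := by
    have h := Real.exp_bound (x := 1) (by norm_num) (n := n+1) (Nat.succ_pos n)
    simp only [one_pow, abs_one, one_mul] at h
    rw [← hS] at h
    have h2 := (abs_le.mp h).2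
    push_cast at h2
    exact le_trans h2 (le_of_eq (by ring))
  have hlbpos : (0:ℝ) < 1 / ((n+1).factorial : ℝ) := by positivity
  rcases le_or_gt p m with hpm | hpm
  · have hple : (p:ℝ)/(n.factorial:ℝ) ≤ S := by
      rw [div_le_iff₀ hF1, mul_comm, ← hmS]
      exact_mod_cast hpm
    have hF3pos : (0:ℝ) < ((n+2).factorial : ℝ) := by exact_mod_cast (n+2).factorial_pos
    have : 1 / ((n+1).factorial : ℝ) < Real.exp 1 - (p:ℝ)/(n.factorial:ℝ) := by
      have : (0:ℝ) < 1 / ((n+2).factorial : ℝ) := by positivity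
      linarith
    exact lt_of_lt_of_le this (le_abs_self _)
  · have hpge : S + 1/(n.factorial:ℝ) ≤ (p:ℝ)/(n.factorial:ℝ) := by
      rw [le_div_iff₀ hF1, add_mul, mul_comm S, ← hmS, one_div, inv_mul_cancel₀ hF1.ne']
      have : (m:ℝ) + 1 ≤ (p:ℝ) := by exact_mod_cast hpm
      linarith
    -- need: Real.exp 1 - p/n! < -(1/(n+1)!)
    have key : Real.exp 1 - (p:ℝ)/(n.factorial:ℝ) < -(1 / ((n+1).factorial : ℝ)) := by
      have h1 : Real.exp 1 - (p:ℝ)/(n.factorial:ℝ) ≤ (Real.exp 1 - S) - 1/(n.factorial:ℝ) := by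
        linarith
      have hnc : (2:ℝ) ≤ (n:ℝ) := by exact_mod_cast hn2
      have hrhs : 1/(n.factorial:ℝ) - 1/((n+1).factorial:ℝ) = (n:ℝ)/((n+1).factorial:ℝ) := by
        rw [hF2eq]
        field_simp
        ring
      have h2 : ((n:ℝ)+2) / (((n+1).factorial : ℝ) * ((n:ℝ)+1)) <
          1/(n.factorial:ℝ) - 1 / ((n+1).factorial : ℝ) := by
        rw [hrhs, div_lt_div_iff₀ (by positivity) hF2]
        have hlt : (n:ℝ)+2 < (n:ℝ)*((n:ℝ)+1) := by nlinarith
        calc ((n:ℝ)+2) * (((n+1).factorial : ℝ)) <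
            ((n:ℝ)*((n:ℝ)+1)) * (((n+1).factorial : ℝ)) :=
              mul_lt_mul_of_pos_right hlt hF2
          _ = (n:ℝ) * (((n+1).factorial : ℝ) * ((n:ℝ)+1)) := by ring
      linarith
    calc 1 / ((n+1).factorial : ℝ) < -(Real.exp 1 - (p:ℝ)/(n.factorial:ℝ)) := by linarith
      _ ≤ |Real.exp 1 - (p:ℝ)/(n.factorial:ℝ)| := neg_le_abs _
end

section
/- If n ≥ 4 is composite, then there exists an integer p such that |e - p/n!| ≤ 1/(P(n!)+1)!, where P(q) is the largest prime factor of q. -/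
theorem e_measure_fails_composite (n : ℕ) (hn : 4 ≤ n) (hcomp : ¬ n.Prime) :
    ∃ p : ℤ, |Real.exp 1 - (p : ℝ) / (n.factorial : ℝ)|
      ≤ 1 / ((P n.factorial + 1).factorial : ℝ) := by
  have hn2 : (2:ℕ) ≤ n := by omega
  have hPle : P n.factorial ≤ n - 1 := by
    have hne : {p : ℕ | p.Prime ∧ p ∣ n.factorial}.Nonempty :=
      ⟨2, Nat.prime_two, Nat.dvd_factorial (by norm_num) hn2⟩
    apply csSup_le hne
    rintro p ⟨hp, hd⟩
    have hpn : p ≤ n := (Nat.Prime.dvd_factorial hp).mp hd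
    have hne : p ≠ n := fun h => hcomp (h ▸ hp)
    omega
  have hP1 : P n.factorial + 1 ≤ n := by omega
  have hfac : (P n.factorial + 1).factorial ≤ n.factorial := Nat.factorial_le hP1
  have hnf : (0:ℝ) < (n.factorial : ℝ) := by exact_mod_cast Nat.factorial_pos n
  have hpf : (0:ℝ) < ((P n.factorial + 1).factorial : ℝ) := by
    exact_mod_cast Nat.factorial_pos _
  set x : ℝ := Real.exp 1 * n.factorial with hx
  refine ⟨⌊x⌋, ?_⟩
  have heq : Real.exp 1 - (⌊x⌋ : ℝ) / n.factorial = (x - ⌊x⌋) / n.factorial := by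
    field_simp [hx]
    rfl
  have habs : |x - (⌊x⌋ : ℝ)| ≤ 1 := by
    rw [abs_le]
    constructor
    · linarith [Int.floor_le x]
    · linarith [Int.lt_floor_add_one x]
  calc |Real.exp 1 - (⌊x⌋ : ℝ) / n.factorial|
      = |x - (⌊x⌋ : ℝ)| / n.factorial := by
        rw [heq, abs_div, abs_of_pos hnf]
    _ ≤ 1 / (n.factorial : ℝ) := by gcongr
    _ ≤ 1 / ((P n.factorial + 1).factorial : ℝ) := by
        apply one_div_le_one_div_of_le hpf
        exact_mod_cast hfac
end

section
/- The intersection over all n ≥ 1 of the nested intervals I_n defined by I_1 = [2,3] and I_n = [left(I_{n-1}) + len(I_{n-1})/n, left(I_{n-1}) + 2·len(I_{n-1})/n] for n ≥ 2 (i.e., I_n is the second of n equal subintervals of I_{n-1}) equals {e}. -/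
/-- The nested intervals, given by their pair of endpoints: `I 1 = [2,3]`, and
`I n` is the second of `n` equal subintervals of `I (n-1)`. -/
noncomputable def I : ℕ → ℝ × ℝ
  | 0 => (2, 3)
  | 1 => (2, 3)
  | (n + 2) => ((I (n + 1)).1 + ((I (n + 1)).2 - (I (n + 1)).1) / (n + 2),
                (I (n + 1)).1 + 2 * ((I (n + 1)).2 - (I (n + 1)).1) / (n + 2))

lemma I_eq : ∀ n : ℕ, 1 ≤ n →
    (I n).1 = ∑ k ∈ Finset.range (n + 1), (1 : ℝ) / k.factorial ∧
    (I n).2 = (I n).1 + 1 / n.factorial := by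
  intro n
  induction n with
  | zero => intro h; omega
  | succ m ih =>
    intro _
    match m with
    | 0 =>
      constructor
      · show (2 : ℝ) = _
        rw [Finset.sum_range_succ, Finset.sum_range_one]
        norm_num
      · show (3 : ℝ) = 2 + _
        norm_num
    | k + 1 =>
      obtain ⟨h1, h2⟩ := ih (by omega)
      have hfac : ((k + 2 : ℕ).factorial : ℝ) = ((k + 1 : ℕ).factorial : ℝ) * (k + 2) := by
        rw [show (k + 2) = (k + 1) + 1 from rfl, Nat.factorial_succ]
        push_cast; ring
      have hf1 : ((k + 1 : ℕ).factorial : ℝ) ≠ 0 := by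
        exact_mod_cast Nat.factorial_ne_zero _
      have hk2 : ((k : ℝ) + 2) ≠ 0 := by positivity
      constructor
      · show (I (k + 1)).1 + ((I (k + 1)).2 - (I (k + 1)).1) / (k + 2) = _
        rw [h2, Finset.sum_range_succ, h1, hfac]
        push_cast
        field_simp
        ring
      · show (I (k + 1)).1 + 2 * ((I (k + 1)).2 - (I (k + 1)).1) / (k + 2) =
          ((I (k + 1)).1 + ((I (k + 1)).2 - (I (k + 1)).1) / (k + 2)) + _
        rw [h2, hfac]
        field_simp
        ring

lemma exp_mem (n : ℕ) (hn : 1 ≤ n) :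
    (∑ k ∈ Finset.range (n + 1), (1 : ℝ) / k.factorial) ≤ Real.exp 1 ∧
    Real.exp 1 ≤ (∑ k ∈ Finset.range (n + 1), (1 : ℝ) / k.factorial) + 1 / n.factorial := by
  constructor
  · have := Real.sum_le_exp_of_nonneg (x := 1) zero_le_one (n + 1)
    simpa using this
  · have h := Real.exp_bound' (x := 1) zero_le_one le_rfl (n := n + 1) (by omega)
    simp only [one_pow, one_mul] at h
    push_cast at h
    have hfac : ((n + 1 : ℕ).factorial : ℝ) = (n.factorial : ℝ) * (n + 1) := by
      rw [Nat.factorial_succ]; push_cast; ring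
    have hfn : (1 : ℝ) ≤ (n.factorial : ℝ) := by
      exact_mod_cast Nat.one_le_iff_ne_zero.mpr (Nat.factorial_ne_zero n)
    have hn' : (1 : ℝ) ≤ (n : ℝ) := by exact_mod_cast hn
    have key : ((n : ℝ) + 1 + 1) / (((n + 1 : ℕ).factorial : ℝ) * ((n : ℝ) + 1)) ≤
        1 / (n.factorial : ℝ) := by
      rw [hfac, div_le_div_iff₀ (by positivity) (by positivity)]
      nlinarith [hfn, hn']
    linarith

theorem iInter_eq_e :
    (⋂ n ∈ {n : ℕ | 1 ≤ n}, Set.Icc (I n).1 (I n).2) = {Real.exp 1} := by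
  ext x
  simp only [Set.mem_iInter, Set.mem_setOf_eq, Set.mem_Icc, Set.mem_singleton_iff]
  constructor
  · intro h
    by_contra hne
    have hpos : 0 < |x - Real.exp 1| := by
      rw [abs_pos, sub_ne_zero]; exact hne
    obtain ⟨n, hn⟩ := exists_nat_gt (1 / |x - Real.exp 1|)
    have hn1 : 1 ≤ n + 1 := by omega
    obtain ⟨ha, hb⟩ := I_eq (n + 1) hn1
    obtain ⟨hx1, hx2⟩ := h (n + 1) hn1
    obtain ⟨he1, he2⟩ := exp_mem (n + 1) hn1
    rw [ha] at hx1; rw [hb, ha] at hx2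
    have habs : |x - Real.exp 1| ≤ 1 / ((n + 1 : ℕ).factorial : ℝ) := by
      rw [abs_sub_le_iff]
      constructor <;> linarith
    have hfge : ((n : ℝ) + 1) ≤ ((n + 1 : ℕ).factorial : ℝ) := by
      exact_mod_cast Nat.self_le_factorial (n + 1)
    have h1 : 1 / ((n + 1 : ℕ).factorial : ℝ) ≤ 1 / ((n : ℝ) + 1) := by
      apply one_div_le_one_div_of_le (by positivity) hfge
    have h2 : 1 / ((n : ℝ) + 1) < |x - Real.exp 1| := by
      rw [div_lt_iff₀ (by positivity)]
      rw [div_lt_iff₀ hpos] at hn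
      nlinarith
    linarith
  · rintro rfl n hn
    obtain ⟨ha, hb⟩ := I_eq n hn
    obtain ⟨he1, he2⟩ := exp_mem n hn
    rw [ha, hb, ha]
    exact ⟨he1, he2⟩
end

section
/- For every n ≥ 1, the interval I_n in the nested construction equals [a_n/n!, (a_n+1)/n!] where a_n = n!·∑_{k=0}^{n} 1/k!, i.e., its left endpoint is the n-th partial sum of the series for e and its length is 1/n!. -/
theorem I_endpoints (n : ℕ) (hn : 1 ≤ n) :
    (I n).1 = ∑ k ∈ Finset.range (n + 1), (1 : ℝ) / (k.factorial : ℝ) ∧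
    (I n).2 = (∑ k ∈ Finset.range (n + 1), (1 : ℝ) / (k.factorial : ℝ)) +
      1 / (n.factorial : ℝ) := by
  induction n with
  | zero => omega
  | succ m ih =>
    rcases Nat.eq_or_lt_of_le hn with h | h
    · obtain rfl : m = 0 := by omega
      norm_num [I, Finset.sum_range_succ, Nat.factorial]
    · have hm : 1 ≤ m := by omega
      obtain ⟨h1, h2⟩ := ih hm
      obtain ⟨m, rfl⟩ : ∃ k, m = k + 1 := ⟨m - 1, by omega⟩
      have hfac : ((m + 1 + 1).factorial : ℝ) = ((m + 1).factorial : ℝ) * (m + 2) := by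
        push_cast [Nat.factorial_succ]; ring
      have hpos : ((m + 1).factorial : ℝ) ≠ 0 := by positivity
      constructor
      · show (I (m + 1)).1 + ((I (m + 1)).2 - (I (m + 1)).1) / (m + 2) = _
        rw [h1, h2, Finset.sum_range_succ (fun k => (1:ℝ)/(k.factorial : ℝ)) ((m+1)+1)]
        rw [hfac]
        field_simp [hfac]
        ring
      · show (I (m + 1)).1 + 2 * ((I (m + 1)).2 - (I (m + 1)).1) / (m + 2) = _
        rw [h1, h2, Finset.sum_range_succ (fun k => (1:ℝ)/(k.factorial : ℝ)) ((m+1)+1)]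
        rw [hfac]
        field_simp [hfac]
        ring
end

section
/- The number cosh(1) = ∑_{n≥0} 1/(2n)! is irrational. -/
open Finset Nat

private lemma cosh_aux_fact : ∀ n k : ℕ, 1 ≤ k → 4 ^ n * (2 * k)! ≤ (2 * (n + k))! := by
  intro n
  induction n with
  | zero => intro k hk; simp
  | succ n ih =>
    intro k hk
    have h2 : 4 * (4 ^ n * (2 * k)!) ≤ 4 * (2 * (n + k))! :=
      Nat.mul_le_mul_left 4 (ih k hk)
    have h3 : (2 * (n + 1 + k))! = (2 * (n + k) + 2) * ((2 * (n + k) + 1) * (2 * (n + k))!) := by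
      have h : 2 * (n + 1 + k) = (2 * (n + k) + 1) + 1 := by ring
      rw [h, Nat.factorial_succ, Nat.factorial_succ]
    have h4 : 4 * (2 * (n + k))! ≤ (2 * (n + 1 + k))! := by
      rw [h3]
      calc 4 * (2 * (n + k))! ≤ (2 * (n + k) + 2) * (2 * (n + k))! := by
            apply Nat.mul_le_mul_right; omega
        _ ≤ (2 * (n + k) + 2) * ((2 * (n + k) + 1) * (2 * (n + k))!) := by
            apply Nat.mul_le_mul_left
            exact Nat.le_mul_of_pos_left _ (by omega)
    calc 4 ^ (n + 1) * (2 * k)! = 4 * (4 ^ n * (2 * k)!) := by ring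
      _ ≤ 4 * (2 * (n + k))! := h2
      _ ≤ (2 * (n + 1 + k))! := h4

theorem cosh_one_irrational : Irrational (Real.cosh 1) := by
  rintro ⟨q, hq⟩
  set f : ℕ → ℝ := fun n => 1 / (2 * n)! with hf
  have hs : HasSum f (Real.cosh 1) := by
    simpa [hf] using Real.hasSum_cosh 1
  have hsum : Summable f := hs.summable
  set k := q.den with hkdef
  have hk : 1 ≤ k := q.pos
  set K := (2 * k)! with hK
  -- split the sum
  have hsplit : ∑ n ∈ range (k + 1), f n + ∑' n, f (n + (k + 1)) = Real.cosh 1 := by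
    rw [Summable.sum_add_tsum_nat_add (k + 1) hsum, hs.tsum_eq]
  set T := ∑' n, f (n + (k + 1)) with hT
  have hfpos : ∀ n : ℕ, 0 < f n := fun n => by
    have : (0:ℝ) < (2 * n)! := by positivity
    simpa [hf] using this
  have hTpos : 0 < T := by
    refine Summable.tsum_pos ((summable_nat_add_iff (k + 1)).mpr hsum) (fun i => (hfpos _).le) 0 (hfpos _)
  -- the head times K is an integer
  set z : ℕ := ∑ n ∈ range (k + 1), K / (2 * n)! with hz
  have hzeq : (K : ℝ) * ∑ n ∈ range (k + 1), f n = (z : ℝ) := by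
    rw [Finset.mul_sum, hz, Nat.cast_sum]
    refine Finset.sum_congr rfl fun n hn => ?_
    have hn' : n ≤ k := by simpa using Nat.lt_succ_iff.mp (Finset.mem_range.mp hn)
    have hdvd : (2 * n)! ∣ K := Nat.factorial_dvd_factorial (by omega)
    rw [Nat.cast_div hdvd (by positivity)]
    simp [hf]
    ring
  -- bound on tail: K * T < 1
  have hterm : ∀ n : ℕ, (K : ℝ) * f (n + (k + 1)) ≤ (1 / 4 : ℝ) ^ (n + 1) := by
    intro n
    have hfac : 4 ^ (n + 1) * K ≤ (2 * (n + (k + 1)))! := by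
      have := cosh_aux_fact (n + 1) k hk
      have he : n + 1 + k = n + (k + 1) := by omega
      rwa [he] at this
    have hM : (0:ℝ) < ((2 * (n + (k + 1)))! : ℝ) := by positivity
    have h4 : (0:ℝ) < (4:ℝ) ^ (n + 1) := by positivity
    have : (K : ℝ) * f (n + (k + 1)) = (K : ℝ) / ((2 * (n + (k + 1)))! : ℝ) := by
      simp [hf]; ring
    rw [this, div_pow, one_pow, div_le_div_iff₀ hM (by positivity : (0:ℝ) < (4:ℝ) ^ (n+1))]
    calc (K : ℝ) * 4 ^ (n + 1) = ((4 ^ (n + 1) * K : ℕ) : ℝ) := by push_cast; ring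
      _ ≤ ((2 * (n + (k + 1)))! : ℝ) := by exact_mod_cast hfac
      _ = 1 * ((2 * (n + (k + 1)))! : ℝ) := by ring
  have hKT : (K : ℝ) * T < 1 := by
    have hsum' : Summable fun n => f (n + (k + 1)) := (summable_nat_add_iff (k + 1)).mpr hsum
    have hgeo : Summable fun n : ℕ => (1 / 4 : ℝ) ^ (n + 1) := by
      simp_rw [pow_succ, mul_comm]
      exact (summable_geometric_of_lt_one (by norm_num) (by norm_num)).mul_left _
    have h1 : (K : ℝ) * T = ∑' n, (K : ℝ) * f (n + (k + 1)) := by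
      rw [hT, tsum_mul_left]
    have h2 : ∑' n, (K : ℝ) * f (n + (k + 1)) ≤ ∑' n : ℕ, (1 / 4 : ℝ) ^ (n + 1) :=
      Summable.tsum_le_tsum hterm (hsum'.mul_left _) hgeo
    have h3 : ∑' n : ℕ, (1 / 4 : ℝ) ^ (n + 1) = (1/4) * (1 - 1/4)⁻¹ := by
      simp_rw [pow_succ, mul_comm]
      rw [tsum_mul_left, tsum_geometric_of_lt_one (by norm_num) (by norm_num)]
    rw [h1]
    calc ∑' n, (K : ℝ) * f (n + (k + 1)) ≤ (1/4) * (1 - 1/4)⁻¹ := h3 ▸ h2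
      _ < 1 := by norm_num
  -- K * q is an integer
  have hden : (k : ℚ) * q = (q.num : ℚ) := by
    rw [hkdef, mul_comm]
    exact_mod_cast Rat.mul_den_eq_num q
  set c : ℕ := K / k with hc
  have hkdvd : k ∣ K := Nat.dvd_factorial hk (by omega)
  have hcK : (c : ℚ) * k = (K : ℚ) := by
    rw [hc]; exact_mod_cast Nat.div_mul_cancel hkdvd
  set m : ℤ := c * q.num with hm
  have hmq : ((m : ℚ) : ℝ) = (K : ℝ) * q := by
    have : (m : ℚ) = (K : ℚ) * q := by
      rw [hm]; push_cast
      rw [← hcK, mul_assoc, hden]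
    rw [this]; push_cast; ring
  -- final contradiction
  have key : ((m - z : ℤ) : ℝ) = (K : ℝ) * T := by
    have : (K : ℝ) * Real.cosh 1 = (z : ℝ) + (K : ℝ) * T := by
      rw [← hsplit, mul_add, hzeq]
    rw [← hq] at this
    have hmq' : (m : ℝ) = (K : ℝ) * (q : ℝ) := by exact_mod_cast hmq
    push_cast
    linarith
  have h0 : (0:ℝ) < ((m - z : ℤ) : ℝ) := by
    rw [key]; positivity
  have h1 : ((m - z : ℤ) : ℝ) < 1 := by rw [key]; exact hKT
  have hg0 : (0:ℤ) < m - z := by exact_mod_cast h0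
  have hg1 : (m - z : ℤ) < 1 := by exact_mod_cast h1
  omega
end

section
/- The number sinh(1) = ∑_{n≥0} 1/(2n+1)! is irrational. -/
private lemma fact_ineq (N : ℕ) : ∀ k : ℕ,
    (2*N+1).factorial * (2*N+2)^(2*(k+1)) ≤ (2*(N+1+k)+1).factorial := by
  intro k
  induction k with
  | zero =>
      have : 2*(N+1+0)+1 = (2*N+1) + 2 := by ring
      rw [this]
      rw [Nat.factorial_succ, Nat.factorial_succ]
      have h1 : (2*N+2)^(2*(0+1)) = (2*N+2) * (2*N+2) := by ring
      rw [h1]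
      calc (2*N+1).factorial * ((2*N+2) * (2*N+2))
          = (2*N+2) * ((2*N+2) * (2*N+1).factorial) := by ring
        _ ≤ (2*N+1+2) * ((2*N+1+1) * (2*N+1).factorial) := by
            apply Nat.mul_le_mul
            · omega
            · apply Nat.mul_le_mul_right; omega
  | succ k ih =>
      have h2 : 2*(N+1+(k+1))+1 = (2*(N+1+k)+1) + 2 := by ring
      rw [h2, Nat.factorial_succ, Nat.factorial_succ]
      have h3 : (2*N+2)^(2*(k+1+1)) = (2*N+2)^(2*(k+1)) * ((2*N+2)*(2*N+2)) := by ring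
      rw [h3]
      calc (2*N+1).factorial * ((2*N+2)^(2*(k+1)) * ((2*N+2)*(2*N+2)))
          = (2*N+2) * ((2*N+2) * ((2*N+1).factorial * (2*N+2)^(2*(k+1)))) := by ring
        _ ≤ (2*(N+1+k)+1+2) * ((2*(N+1+k)+1+1) * (2*(N+1+k)+1).factorial) := by
            apply Nat.mul_le_mul
            · omega
            · exact Nat.mul_le_mul (by omega) ih

set_option maxHeartbeats 1000000 in
theorem sinh_one_irrational : Irrational (Real.sinh 1) := by
  rw [Irrational]
  intro hmem
  obtain ⟨q, hq⟩ := hmem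
  -- series for sinh 1
  have hs : HasSum (fun n : ℕ => (1:ℝ) / (2*n+1).factorial) (Real.sinh 1) := by
    have := Real.hasSum_sinh 1
    simpa using this
  set d : ℕ := q.den with hd
  set N : ℕ := d with hN
  set M : ℕ := (2*N+1).factorial with hM
  have hMpos : 0 < (M:ℝ) := by positivity
  -- tail sum
  have htail : HasSum (fun k : ℕ => (1:ℝ) / (2*(k + (N+1))+1).factorial)
      (Real.sinh 1 - ∑ i ∈ Finset.range (N+1), (1:ℝ) / (2*i+1).factorial) := by
    refine (hasSum_nat_add_iff (f := fun n : ℕ => (1:ℝ) / (2*n+1).factorial) (N+1)).mpr ?_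
    rw [sub_add_cancel]
    exact hs
  set T : ℝ := Real.sinh 1 - ∑ i ∈ Finset.range (N+1), (1:ℝ) / (2*i+1).factorial with hT
  -- T > 0
  have hTpos : 0 < T := by
    have h0 : (fun k : ℕ => (1:ℝ) / (2*(k + (N+1))+1).factorial) 0 ≤ T :=
      le_hasSum htail 0 (fun j _ => by positivity)
    simp only at h0
    have h1 : (0:ℝ) < (1:ℝ) / (2*(0 + (N+1))+1).factorial := by positivity
    exact lt_of_lt_of_le h1 h0
  -- M * T < 1
  have hr : (0:ℝ) ≤ 1 / ((2*N+2:ℕ):ℝ)^2 := by positivity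
  have hrlt : 1 / ((2*N+2:ℕ):ℝ)^2 < 1 := by
    rw [div_lt_one (by positivity)]
    have : (1:ℝ) < ((2*N+2:ℕ):ℝ) := by
      have : 2 ≤ 2*N+2 := by omega
      exact_mod_cast by omega
    nlinarith
  set r : ℝ := 1 / ((2*N+2:ℕ):ℝ)^2 with hrdef
  have hgeo : HasSum (fun k : ℕ => r * r^k) (r * (1 - r)⁻¹) :=
    (hasSum_geometric_of_lt_one hr hrlt).mul_left r
  have hMT : HasSum (fun k : ℕ => (M:ℝ) * ((1:ℝ) / (2*(k + (N+1))+1).factorial))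
      ((M:ℝ) * T) := htail.mul_left _
  have hle : (M:ℝ) * T ≤ r * (1 - r)⁻¹ := by
    apply hasSum_le _ hMT hgeo
    intro k
    have hfi : M * (2*N+2)^(2*(k+1)) ≤ (2*(N+1+k)+1).factorial := fact_ineq N k
    have hfi' : (M:ℝ) * ((2*N+2:ℕ):ℝ)^(2*(k+1)) ≤ ((2*(N+1+k)+1).factorial : ℝ) := by
      exact_mod_cast hfi
    have hk : (k + (N+1)) = N+1+k := by omega
    rw [hk]
    have hfac : (0:ℝ) < ((2*(N+1+k)+1).factorial : ℝ) := by positivity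
    have hpow : (0:ℝ) < ((2*N+2:ℕ):ℝ)^(2*(k+1)) := by positivity
    have hrr : r * r^k = 1 / ((2*N+2:ℕ):ℝ)^(2*(k+1)) := by
      rw [hrdef]
      rw [div_mul_eq_mul_div, one_mul, div_pow, one_pow, div_div, ← pow_mul]
      ring_nf
    rw [hrr]
    rw [mul_one_div, div_le_div_iff₀ hfac hpow]
    linarith [hfi']
  have hr4 : r ≤ 1/4 := by
    rw [hrdef]
    have h2 : (2:ℝ) ≤ ((2*N+2:ℕ):ℝ) := by exact_mod_cast Nat.le_add_left 2 (2*N)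
    rw [div_le_div_iff₀ (by positivity) (by norm_num)]
    nlinarith
  have hlt1 : (M:ℝ) * T < 1 := by
    have hlast : r * (1 - r)⁻¹ < 1 := by
      rw [mul_inv_lt_iff₀ (by linarith)]
      linarith
    exact lt_of_le_of_lt hle hlast
  have hMTpos : 0 < (M:ℝ) * T := by positivity
  -- M * T is an integer
  -- M * sinh 1 is an integer: d ∣ M
  have hdvd : d ∣ M := by
    have hdpos : 0 < d := q.pos
    exact Nat.dvd_factorial hdpos (by omega)
  obtain ⟨c, hc⟩ := hdvd
  have hz1 : (M:ℝ) * Real.sinh 1 = ((c * q.num : ℤ) : ℝ) := by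
    rw [← hq]
    have : ((q:ℝ)) * d = q.num := by
      exact_mod_cast Rat.mul_den_eq_num q
    push_cast
    rw [hc]
    push_cast
    nlinarith [this]
  -- M * partial sum is an integer
  have hz2 : (M:ℝ) * (∑ i ∈ Finset.range (N+1), (1:ℝ) / (2*i+1).factorial)
      = ((∑ i ∈ Finset.range (N+1), (M / (2*i+1).factorial : ℕ) : ℕ) : ℝ) := by
    rw [Finset.mul_sum]
    push_cast
    apply Finset.sum_congr rfl
    intro i hi
    have hi' : i < N+1 := Finset.mem_range.mp hi
    have hdv : (2*i+1).factorial ∣ M :=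
      Nat.factorial_dvd_factorial (by omega)
    rw [Nat.cast_div hdv (by positivity)]
    field_simp
  set A : ℕ := ∑ i ∈ Finset.range (N+1), (M / (2*i+1).factorial : ℕ) with hA
  have hint : (M:ℝ) * T = ((c * q.num - A : ℤ) : ℝ) := by
    rw [hT, mul_sub, hz1, hz2]
    push_cast
    ring
  rw [hint] at hMTpos hlt1
  have h0 : (0:ℤ) < c * q.num - A := by exact_mod_cast hMTpos
  have h1 : (c * q.num - A : ℤ) < 1 := by exact_mod_cast hlt1
  omega
end

section
/- Let (b_n)_{n≥1} be integers with b_n ≥ 2, and (a_n)_{n≥0} integers with 0 ≤ a_n ≤ b_n - 1 for n ≥ 1. If every prime divides infinitely many of the b_n, and both a_n > 0 infinitely often and a_n < b_n - 1 infinitely often, then the sum a_0 + ∑_{n≥1} a_n/(b_1·b_2···b_n) is irrational. -/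
open Finset Filter

namespace CantorSeriesAux

/-- Real product of `b` over `Ioc M (M+k)`. -/
noncomputable def R (b : ℕ → ℤ) (M k : ℕ) : ℝ := ∏ i ∈ Finset.Ioc M (M + k), (b i : ℝ)

lemma R_succ (b : ℕ → ℤ) (M k : ℕ) :
    R b M (k + 1) = R b M k * (b (M + k + 1) : ℝ) := by
  unfold R
  rw [show M + (k + 1) = (M + k) + 1 from rfl,
    Finset.prod_Ioc_succ_top (Nat.le_add_right M k)]

lemma R_ge (b : ℕ → ℤ) (hb : ∀ n, 1 ≤ n → 2 ≤ b n) (M k : ℕ) :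
    (2 : ℝ) ^ k ≤ R b M k := by
  unfold R
  have h := Finset.prod_le_prod (s := Finset.Ioc M (M + k)) (f := fun _ => (2 : ℝ))
    (g := fun i => (b i : ℝ)) (fun i _ => by norm_num)
    (fun i hi => by
      have h1 : M < i := (Finset.mem_Ioc.mp hi).1
      show (2 : ℝ) ≤ (b i : ℝ)
      exact_mod_cast hb i (by omega))
  simpa [Finset.prod_const, Nat.card_Ioc] using h

lemma R_pos (b : ℕ → ℤ) (hb : ∀ n, 1 ≤ n → 2 ≤ b n) (M k : ℕ) : 0 < R b M k :=
  lt_of_lt_of_le (by positivity) (R_ge b hb M k)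

/-- The tail term sequence starting after index `M`. -/
noncomputable def g (a b : ℕ → ℤ) (M k : ℕ) : ℝ := (a (M + k + 1) : ℝ) / R b M (k + 1)

/-- The dominating telescoping sequence. -/
noncomputable def d (b : ℕ → ℤ) (M k : ℕ) : ℝ := ((b (M + k + 1) : ℝ) - 1) / R b M (k + 1)

lemma d_eq (b : ℕ → ℤ) (hb : ∀ n, 1 ≤ n → 2 ≤ b n) (M k : ℕ) :
    d b M k = 1 / R b M k - 1 / R b M (k + 1) := by
  have h0 : R b M k ≠ 0 := (R_pos b hb M k).ne'
  have h1 : R b M (k + 1) ≠ 0 := (R_pos b hb M (k + 1)).ne'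
  have hs := R_succ b M k
  have hb2 : (2 : ℝ) ≤ (b (M + k + 1) : ℝ) := by exact_mod_cast hb (M + k + 1) (by omega)
  have hbne : (b (M + k + 1) : ℝ) ≠ 0 := by linarith
  field_simp [d, hs]
  rw [d, hs]
  field_simp

lemma d_nonneg (b : ℕ → ℤ) (hb : ∀ n, 1 ≤ n → 2 ≤ b n) (M k : ℕ) : 0 ≤ d b M k := by
  apply div_nonneg _ (R_pos b hb M (k + 1)).le
  have := hb (M + k + 1) (by omega)
  have : (2 : ℝ) ≤ (b (M + k + 1) : ℝ) := by exact_mod_cast this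
  linarith

lemma d_le (b : ℕ → ℤ) (hb : ∀ n, 1 ≤ n → 2 ≤ b n) (M k : ℕ) :
    d b M k ≤ (1 / 2 : ℝ) ^ k := by
  rw [d_eq b hb M k]
  have h1 : 0 < R b M (k + 1) := R_pos b hb M (k + 1)
  have h2 : (2 : ℝ) ^ k ≤ R b M k := R_ge b hb M k
  have h3 : 0 < R b M k := R_pos b hb M k
  have : 1 / R b M k ≤ 1 / (2 : ℝ) ^ k := by
    apply one_div_le_one_div_of_le (by positivity) h2
  have h4 : 0 < 1 / R b M (k + 1) := by positivity
  calc 1 / R b M k - 1 / R b M (k + 1) ≤ 1 / R b M k := by linarith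
    _ ≤ 1 / (2:ℝ) ^ k := this
    _ = (1/2 : ℝ) ^ k := by rw [div_pow]; norm_num

lemma summable_d (b : ℕ → ℤ) (hb : ∀ n, 1 ≤ n → 2 ≤ b n) (M : ℕ) :
    Summable (d b M) :=
  Summable.of_nonneg_of_le (d_nonneg b hb M) (d_le b hb M)
    (summable_geometric_of_lt_one (by norm_num) (by norm_num))

lemma hasSum_d (b : ℕ → ℤ) (hb : ∀ n, 1 ≤ n → 2 ≤ b n) (M : ℕ) :
    HasSum (d b M) 1 := by
  rw [hasSum_iff_tendsto_nat_of_nonneg (d_nonneg b hb M)]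
  have key : ∀ n, ∑ k ∈ Finset.range n, d b M k = 1 - 1 / R b M n := by
    intro n
    have : ∑ k ∈ Finset.range n, d b M k
        = ∑ k ∈ Finset.range n, (1 / R b M k - 1 / R b M (k + 1)) := by
      exact Finset.sum_congr rfl fun k _ => d_eq b hb M k
    rw [this, Finset.sum_range_sub' (fun k => 1 / R b M k)]
    simp [R]
  simp only [key]
  have h0 : Tendsto (fun n => 1 / R b M n) atTop (nhds 0) := by
    apply squeeze_zero (fun n => (one_div_pos.mpr (R_pos b hb M n)).le) (fun n => ?_)
      (tendsto_pow_atTop_nhds_zero_of_lt_one (by norm_num : (0:ℝ) ≤ 1/2) (by norm_num))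
    have h2 : (2 : ℝ) ^ n ≤ R b M n := R_ge b hb M n
    calc 1 / R b M n ≤ 1 / (2:ℝ) ^ n := one_div_le_one_div_of_le (by positivity) h2
      _ = (1/2 : ℝ) ^ n := by rw [div_pow]; norm_num
  have := Tendsto.sub (tendsto_const_nhds (x := (1:ℝ))) h0
  simpa using this

lemma g_nonneg (a b : ℕ → ℤ) (hb : ∀ n, 1 ≤ n → 2 ≤ b n)
    (ha : ∀ n, 1 ≤ n → 0 ≤ a n ∧ a n ≤ b n - 1) (M k : ℕ) : 0 ≤ g a b M k := by
  apply div_nonneg _ (R_pos b hb M (k + 1)).le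
  exact_mod_cast (ha (M + k + 1) (by omega)).1

lemma g_le_d (a b : ℕ → ℤ) (hb : ∀ n, 1 ≤ n → 2 ≤ b n)
    (ha : ∀ n, 1 ≤ n → 0 ≤ a n ∧ a n ≤ b n - 1) (M k : ℕ) : g a b M k ≤ d b M k := by
  have hR := (R_pos b hb M (k + 1)).le
  have h2 : (a (M + k + 1) : ℝ) ≤ (b (M + k + 1) : ℝ) - 1 := by
    exact_mod_cast (ha (M + k + 1) (by omega)).2
  unfold g d
  gcongr

lemma summable_g (a b : ℕ → ℤ) (hb : ∀ n, 1 ≤ n → 2 ≤ b n)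
    (ha : ∀ n, 1 ≤ n → 0 ≤ a n ∧ a n ≤ b n - 1) (M : ℕ) :
    Summable (g a b M) :=
  Summable.of_nonneg_of_le (g_nonneg a b hb ha M) (g_le_d a b hb ha M) (summable_d b hb M)

lemma tsum_g_pos (a b : ℕ → ℤ) (hb : ∀ n, 1 ≤ n → 2 ≤ b n)
    (ha : ∀ n, 1 ≤ n → 0 ≤ a n ∧ a n ≤ b n - 1)
    (hpos : {n : ℕ | 1 ≤ n ∧ 0 < a n}.Infinite) (M : ℕ) :
    0 < ∑' k, g a b M k := by
  obtain ⟨n, hn, hMn⟩ := hpos.exists_gt M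
  have hk : M + (n - M - 1) + 1 = n := by omega
  apply Summable.tsum_pos (summable_g a b hb ha M) (g_nonneg a b hb ha M) (n - M - 1)
  unfold g
  rw [hk]
  exact div_pos (by exact_mod_cast hn.2) (R_pos b hb M _)

lemma tsum_g_lt_one (a b : ℕ → ℤ) (hb : ∀ n, 1 ≤ n → 2 ≤ b n)
    (ha : ∀ n, 1 ≤ n → 0 ≤ a n ∧ a n ≤ b n - 1)
    (hlt : {n : ℕ | 1 ≤ n ∧ a n < b n - 1}.Infinite) (M : ℕ) :
    ∑' k, g a b M k < 1 := by
  obtain ⟨n, hn, hMn⟩ := hlt.exists_gt M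
  have hk : M + (n - M - 1) + 1 = n := by omega
  have h1 : ∑' k, g a b M k < ∑' k, d b M k := by
    apply Summable.tsum_lt_tsum (i := n - M - 1) (g_le_d a b hb ha M) ?_
      (summable_g a b hb ha M) (summable_d b hb M)
    unfold g d
    rw [hk]
    exact (div_lt_div_iff_of_pos_right (R_pos b hb M _)).mpr (by
      have := hn.2
      push_cast
      exact_mod_cast this)
  rwa [(hasSum_d b hb M).tsum_eq] at h1

/-- Integer product of `b` over `Ioc 0 N`. -/
def Pz (b : ℕ → ℤ) (N : ℕ) : ℤ := ∏ i ∈ Finset.Ioc 0 N, b i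

lemma Pz_cast (b : ℕ → ℤ) (N : ℕ) : ((Pz b N : ℤ) : ℝ) = R b 0 N := by
  unfold Pz R
  push_cast
  norm_num

lemma exists_dvd_Pz (b : ℕ → ℤ) (hb : ∀ n, 1 ≤ n → 2 ≤ b n)
    (hprime : ∀ p : ℕ, p.Prime → {n : ℕ | 1 ≤ n ∧ (p : ℤ) ∣ b n}.Infinite) :
    ∀ m : ℕ, 0 < m → ∃ N, (m : ℤ) ∣ Pz b N := by
  intro m
  induction m using Nat.strong_induction_on with
  | _ m ih =>
    intro hm
    rcases eq_or_lt_of_le (show 1 ≤ m from hm) with h1 | h1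
    · exact ⟨0, by rw [← h1]; simp [Pz]⟩
    · set p := m.minFac with hp
      have hpp : p.Prime := Nat.minFac_prime (by omega)
      have hpd : p ∣ m := Nat.minFac_dvd m
      obtain ⟨m', hm'⟩ := hpd
      have hm'pos : 0 < m' := by
        rcases Nat.eq_zero_or_pos m' with h | h
        · subst h; simp at hm'; omega
        · exact h
      have hm'lt : m' < m := by
        have := hpp.two_le
        calc m' < m' * p := by nlinarith
          _ = m := by rw [hm', Nat.mul_comm]
      obtain ⟨N', hN'⟩ := ih m' hm'lt hm'pos
      obtain ⟨n, hn, hNn⟩ := (hprime p hpp).exists_gt N'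
      refine ⟨n, ?_⟩
      have key : Pz b n = Pz b N' * ∏ i ∈ Finset.Ioc N' n, b i := by
        unfold Pz
        rw [Finset.prod_Ioc_consecutive _ (Nat.zero_le N') hNn.le]
      rw [key, hm']
      push_cast
      have h4 : ((p : ℕ) : ℤ) ∣ ∏ i ∈ Finset.Ioc N' n, b i := dvd_trans hn.2
        (Finset.dvd_prod_of_mem _ (Finset.mem_Ioc.mpr ⟨hNn, le_refl n⟩))
      rw [mul_comm (Pz b N')]
      exact mul_dvd_mul h4 hN' 

end CantorSeriesAux

theorem cantor_series_irrational (a b : ℕ → ℤ)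
    (hb : ∀ n, 1 ≤ n → 2 ≤ b n)
    (ha : ∀ n, 1 ≤ n → 0 ≤ a n ∧ a n ≤ b n - 1)
    (hprime : ∀ p : ℕ, p.Prime → {n : ℕ | 1 ≤ n ∧ (p : ℤ) ∣ b n}.Infinite)
    (hpos : {n : ℕ | 1 ≤ n ∧ 0 < a n}.Infinite)
    (hlt : {n : ℕ | 1 ≤ n ∧ a n < b n - 1}.Infinite) :
    Irrational ((a 0 : ℝ) +
      ∑' n : ℕ, (a (n + 1) : ℝ) / ∏ i ∈ Finset.Icc 1 (n + 1), (b i : ℝ)) := by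
  open CantorSeriesAux in
  rintro ⟨q, hq⟩
  have hser : ∀ n : ℕ, (a (n + 1) : ℝ) / ∏ i ∈ Finset.Icc 1 (n + 1), (b i : ℝ)
      = g a b 0 n := by
    intro n
    unfold g R
    rw [show Finset.Icc 1 (n + 1) = Finset.Ioc 0 (n + 1) from Finset.Icc_add_one_left_eq_Ioc 0 (n + 1)]
    norm_num
  rw [show (∑' n : ℕ, (a (n + 1) : ℝ) / ∏ i ∈ Finset.Icc 1 (n + 1), (b i : ℝ))
      = ∑' n : ℕ, g a b 0 n from tsum_congr hser] at hq
  obtain ⟨N, hN⟩ := exists_dvd_Pz b hb hprime q.den q.den_pos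
  set T : ℝ := R b 0 N with hT
  have hTpos : 0 < T := R_pos b hb 0 N
  -- split the series at N
  have hsum0 : Summable (g a b 0) := summable_g a b hb ha 0
  have hsplit := Summable.sum_add_tsum_nat_add N hsum0
  have hshift : ∀ k : ℕ, g a b 0 (k + N) = g a b N k / T := by
    intro k
    unfold g R
    have harith : 0 + (k + N + 1) = N + (N + (k + 1) - N) := by omega
    have hcons := Finset.prod_Ioc_consecutive (fun i => (b i : ℝ))
      (Nat.zero_le N) (Nat.le_add_right N (k + 1))
    have h2 : (∏ i ∈ Finset.Ioc 0 (0 + (k + N + 1)), (b i : ℝ))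
        = (∏ i ∈ Finset.Ioc 0 (0 + N), (b i : ℝ)) * ∏ i ∈ Finset.Ioc N (N + (k + 1)), (b i : ℝ) := by
      rw [show (0 : ℕ) + N = N by omega, show 0 + (k + N + 1) = N + (k + 1) by omega]
      rw [hcons]
    rw [show 0 + (k + N) + 1 = 0 + (k + N + 1) by omega, h2]
    have hR2 : (0:ℝ) < ∏ i ∈ Finset.Ioc N (N + (k + 1)), (b i : ℝ) := R_pos b hb N (k + 1)
    rw [show N + k + 1 = N + (k + 1) by omega]
    rw [hT]
    unfold R
    rw [show (0 : ℕ) + N = N by omega]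
    field_simp
    ring
  have htail : (∑' k : ℕ, g a b 0 (k + N)) = (∑' k : ℕ, g a b N k) / T := by
    rw [tsum_congr hshift, tsum_div_const]
  set t : ℝ := ∑' k : ℕ, g a b N k with ht
  have htpos : 0 < t := tsum_g_pos a b hb ha hpos N
  have htlt : t < 1 := tsum_g_lt_one a b hb ha hlt N
  -- the truncated part times T is an integer
  have htrunc : ∀ i ∈ Finset.range N,
      T * g a b 0 i = ((a (i + 1) * ∏ j ∈ Finset.Ioc (i + 1) N, b j : ℤ) : ℝ) := by
    intro i hi
    have hiN : i + 1 ≤ N := Finset.mem_range.mp hi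
    unfold g R
    have hcons := Finset.prod_Ioc_consecutive (fun i => (b i : ℝ))
      (Nat.zero_le (i + 1)) hiN
    have hRpos : (0:ℝ) < ∏ j ∈ Finset.Ioc 0 (0 + (i + 1)), (b j : ℝ) := R_pos b hb 0 (i + 1)
    rw [show (0:ℕ) + i + 1 = 0 + (i + 1) by omega]
    rw [hT]; unfold R
    rw [show (0:ℕ) + N = N by omega, ← hcons, show (0:ℕ) + (i+1) = i + 1 by omega]
    rw [show (0:ℕ) + (i + 1) = i + 1 by omega] at hRpos
    push_cast
    field_simp
  set z : ℤ := Pz b N * a 0 + ∑ i ∈ Finset.range N, a (i + 1) * ∏ j ∈ Finset.Ioc (i + 1) N, b j with hz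
  have hzval : (z : ℝ) = T * ((a 0 : ℝ) + ∑ i ∈ Finset.range N, g a b 0 i) := by
    rw [hz]
    push_cast
    rw [mul_add, Finset.mul_sum]
    rw [Pz_cast]
    congr 1
    refine (Finset.sum_congr rfl ?_).symm
    intro i hi
    rw [htrunc i hi]
    push_cast
    ring
  -- T * x is an integer
  obtain ⟨e, he⟩ := hN
  have hqden : ((q.den : ℝ)) ≠ 0 := by
    exact_mod_cast q.den_pos.ne'
  have hwval : T * ((a 0 : ℝ) + ∑' n : ℕ, g a b 0 n) = ((e * q.num : ℤ) : ℝ) := by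
    rw [← hq]
    have h1 : (q : ℝ) = (q.num : ℝ) / (q.den : ℝ) := by
      rw [Rat.cast_def]
    have h2 : T = ((Pz b N : ℤ) : ℝ) := (Pz_cast b N).symm
    rw [h1, h2, he]
    push_cast
    field_simp
  -- combine
  have hxsplit : (a 0 : ℝ) + ∑' n : ℕ, g a b 0 n
      = ((a 0 : ℝ) + ∑ i ∈ Finset.range N, g a b 0 i) + t / T := by
    rw [← hsplit, htail, ht]
    ring
  have hfin : t = ((e * q.num - z : ℤ) : ℝ) := by
    have := hwval
    rw [hxsplit, mul_add, ← hzval] at this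
    have h3 : T * (t / T) = t := by field_simp
    rw [h3] at this
    push_cast at this ⊢
    linarith
  have h0 : (0 : ℝ) < ((e * q.num - z : ℤ) : ℝ) := by rw [← hfin]; exact htpos
  have h1 : ((e * q.num - z : ℤ) : ℝ) < 1 := by rw [← hfin]; exact htlt
  have h0' : 0 < e * q.num - z := by exact_mod_cast h0
  have h1' : e * q.num - z < 1 := by exact_mod_cast h1
  omega
end

section
/- If n ≥ 3 and the n-th partial sum s_n = ∑_{k=0}^{n} 1/k! has denominator n! in lowest terms, then s_n is not a convergent of the simple continued fraction expansion of e. -/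
open GenContFract in
/-- The auxiliary continuants of the canonical continued fraction of a real number are
integer-valued. -/
lemma exists_int_pair_contsAux (v : ℝ) (n : ℕ) :
    ∃ a b : ℤ, ((GenContFract.of v).contsAux n).a = (a : ℝ) ∧
      ((GenContFract.of v).contsAux n).b = (b : ℝ) := by
  induction n using Nat.strong_induction_on with
  | _ n IH =>
    match n with
    | 0 => exact ⟨1, 0, by simp [contsAux], by simp [contsAux]⟩
    | 1 => exact ⟨⌊v⌋, 1, by simp [contsAux, of_h_eq_floor], by simp [contsAux]⟩
    | (n + 2) =>
      obtain ⟨pa, pb, hpa, hpb⟩ := IH (n + 1) (by omega)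
      obtain ⟨ppa, ppb, hppa, hppb⟩ := IH n (by omega)
      rcases hs : (GenContFract.of v).s.get? n with _ | gp
      · have hst : (GenContFract.of v).contsAux (n + 2) =
            (GenContFract.of v).contsAux (n + 1) :=
          contsAux_stable_of_terminated (by omega) hs
        exact ⟨pa, pb, by rw [hst]; exact hpa, by rw [hst]; exact hpb⟩
      · obtain ⟨ha1, z, hbz⟩ := of_partNum_eq_one_and_exists_int_partDen_eq hs
        have hrec := contsAux_recurrence hs rfl rfl
        refine ⟨z * pa + ppa, z * pb + ppb, ?_, ?_⟩ <;>
          simp [hrec, nextConts, nextNum, nextDen, ha1, hbz, hpa, hpb, hppa, hppb]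

theorem partial_sum_not_convergent (n : ℕ) (hn : 3 ≤ n)
    (hden : (∑ k ∈ Finset.range (n + 1), (1 : ℚ) / (k.factorial : ℚ)).den = n.factorial) :
    ∀ m : ℕ, (GenContFract.of (Real.exp 1)).convs m ≠
      ((∑ k ∈ Finset.range (n + 1), (1 : ℚ) / (k.factorial : ℚ)) : ℝ) := by
  intro m hconv
  set S : ℚ := ∑ k ∈ Finset.range (n + 1), (1 : ℚ) / (k.factorial : ℚ) with hS
  set g := GenContFract.of (Real.exp 1) with hg
  have hconv2 : g.convs m = (S : ℝ) := by
    rw [hconv, hS]; push_cast; simp [one_div]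
  -- Lower bound on `exp 1 - S`.
  have hsum : ((S : ℝ)) = ∑ k ∈ Finset.range (n + 1), (1 : ℝ) / (k.factorial : ℝ) := by
    push_cast [hS]; rfl
  have hlow : (S : ℝ) + 1 / ((n + 1).factorial : ℝ) + 1 / ((n + 2).factorial : ℝ)
      ≤ Real.exp 1 := by
    have h' : ∑ i ∈ Finset.range (n + 3), (1 : ℝ) ^ i / (i.factorial : ℝ) ≤ Real.exp 1 :=
      Real.sum_le_exp_of_nonneg zero_le_one (n + 3)
    have hexp : ∑ i ∈ Finset.range (n + 3), (1 : ℝ) ^ i / (i.factorial : ℝ)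
        = ∑ k ∈ Finset.range (n + 1), (1 : ℝ) / (k.factorial : ℝ)
          + 1 / ((n + 1).factorial : ℝ) + 1 / ((n + 2).factorial : ℝ) := by
      rw [show n + 3 = (n + 1) + 1 + 1 by ring,
        Finset.sum_range_succ, Finset.sum_range_succ]
      simp only [one_pow]
    rw [hexp] at h'
    rw [hsum]
    exact h'
  have hfact_pos1 : (0 : ℝ) < ((n + 1).factorial : ℝ) := by positivity
  have hfact_pos2 : (0 : ℝ) < ((n + 2).factorial : ℝ) := by positivity
  by_cases hterm : ∃ k, k ≤ m ∧ g.TerminatedAt k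
  · -- terminating case: `exp 1` would be equal to `S`, contradicting the strict lower bound.
    obtain ⟨k, hkm, hk⟩ := hterm
    have h1 : Real.exp 1 = g.convs k := GenContFract.of_correctness_of_terminatedAt hk
    have h2 : g.convs m = g.convs k := GenContFract.convs_stable_of_terminated hkm hk
    have hES : Real.exp 1 = (S : ℝ) := by rw [h1, ← h2, hconv2]
    rw [← hES] at hlow
    nlinarith [one_div_pos.mpr hfact_pos1, one_div_pos.mpr hfact_pos2]
  · push_neg at hterm
    have hnot_term : ¬g.TerminatedAt m := hterm m le_rfl
    -- the denominators are integers
    obtain ⟨A, B, hA, hB⟩ := exists_int_pair_contsAux (Real.exp 1) (m + 1)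
    have hdenB : g.dens m = (B : ℝ) := by
      rw [hg, GenContFract.den_eq_conts_b, GenContFract.nth_cont_eq_succ_nth_contAux]
      exact hB
    have hnumA : g.nums m = (A : ℝ) := by
      rw [hg, GenContFract.num_eq_conts_a, GenContFract.nth_cont_eq_succ_nth_contAux]
      exact hA
    -- positivity of the denominator
    have hfib : ((Nat.fib (m + 1) : ℝ)) ≤ g.dens m := by
      apply GenContFract.succ_nth_fib_le_of_nth_den
      rcases Nat.eq_zero_or_pos m with h0 | h0
      · exact Or.inl h0
      · exact Or.inr (hterm (m - 1) (by omega))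
    have hfib_pos : (0 : ℝ) < (Nat.fib (m + 1) : ℝ) := by
      exact_mod_cast Nat.fib_pos.mpr (Nat.succ_pos m)
    have hBpos : (0 : ℝ) < (B : ℝ) := lt_of_lt_of_le hfib_pos (hdenB ▸ hfib)
    have hBposZ : (0 : ℤ) < B := by exact_mod_cast hBpos
    -- `S = A / B` as rationals, hence `n! = S.den ∣ B`
    have hSAB : ((A : ℚ) / (B : ℚ)) = S := by
      have : ((A : ℝ)) / ((B : ℝ)) = (S : ℝ) := by
        rw [← hnumA, ← hdenB, ← GenContFract.conv_eq_num_div_den]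
        exact hconv2
      have := this
      rw [show ((A : ℝ)) / ((B : ℝ)) = (((A : ℚ) / (B : ℚ) : ℚ) : ℝ) by push_cast; ring] at this
      exact_mod_cast this
    have hdvd : ((S.den : ℤ)) ∣ B := by
      rw [← hSAB, ← Rat.divInt_eq_div]
      exact Rat.den_dvd A B
    have hfacB : ((n.factorial : ℤ)) ≤ B := by
      rw [← hden]
      exact Int.le_of_dvd hBposZ hdvd
    have hfacB' : ((n.factorial : ℝ)) ≤ g.dens m := by
      rw [hdenB]; exact_mod_cast hfacB
    have hmono : g.dens m ≤ g.dens (m + 1) := GenContFract.of_den_mono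
    have hfac_pos : (0 : ℝ) < (n.factorial : ℝ) := by positivity
    -- the approximation bound
    have happrox := GenContFract.abs_sub_convs_le (v := Real.exp 1) (n := m) hnot_term
    rw [← hg, hconv2] at happrox
    have hgap : Real.exp 1 - (S : ℝ) ≤ 1 / (g.dens m * g.dens (m + 1)) :=
      (le_abs_self _).trans happrox
    have hdd : ((n.factorial : ℝ)) * ((n.factorial : ℝ)) ≤ g.dens m * g.dens (m + 1) := by
      have := hfacB'.trans hmono
      nlinarith
    have hbound : 1 / (g.dens m * g.dens (m + 1)) ≤
        1 / (((n.factorial : ℝ)) * ((n.factorial : ℝ))) := by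
      apply one_div_le_one_div_of_le
      · positivity
      · exact hdd
    -- `(n!)² ≥ (n+1)!` since `n + 1 ≤ n!` for `n ≥ 3`
    have hn1 : (n + 1 : ℕ) ≤ n.factorial := Nat.lt_factorial_self hn
    have hsq : ((n + 1).factorial : ℝ) ≤ ((n.factorial : ℝ)) * ((n.factorial : ℝ)) := by
      rw [Nat.factorial_succ]
      push_cast
      have : ((n : ℝ) + 1) ≤ (n.factorial : ℝ) := by exact_mod_cast hn1
      nlinarith
    have hbound2 : 1 / (((n.factorial : ℝ)) * ((n.factorial : ℝ))) ≤
        1 / (((n + 1).factorial : ℝ)) := by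
      apply one_div_le_one_div_of_le
      · positivity
      · exact hsq
    have hfinal : Real.exp 1 - (S : ℝ) ≤ 1 / (((n + 1).factorial : ℝ)) :=
      hgap.trans (hbound.trans hbound2)
    nlinarith [one_div_pos.mpr hfact_pos2]
end
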